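/- Suppose r₁ > 0, r₂ > 0, c < r₁ and c ≤ r₂. Then the denominator r₁ + r₂ − 2c is strictly positive, the weight ω* := (r₁ − c)/(r₁ + r₂ − 2c) lies in the half-open interval (0, 1], and ω* minimizes R over [0,1]: for every ω ∈ [0,1], R(ω*) ≤ R(ω), with equality only if ω = ω*. -/

import Mathlib

/-- Lemma 1 (optimal pooling weight), interior case: if `r₁ > 0`, `r₂ > 0`, `c < r₁` and
`c ≤ r₂`, then the denominator `r₁ + r₂ - 2c` is strictly positive, the weight
`ω* = (r₁ - c)/(r₁ + r₂ - 2c)` lies in `(0, 1]`, and `ω*` minimizes the pooled asymptotic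
risk `R(ω) = (1-ω)²r₁ + ω²r₂ + 2ω(1-ω)c` over `[0,1]`, uniquely so. -/
theorem pooled_risk_optimal_weight_interior
    (r₁ r₂ c : ℝ) (hr₁ : 0 < r₁) (hr₂ : 0 < r₂) (hc₁ : c < r₁) (hc₂ : c ≤ r₂)
    (R : ℝ → ℝ) (hR : ∀ ω, R ω = (1 - ω) ^ 2 * r₁ + ω ^ 2 * r₂ + 2 * ω * (1 - ω) * c)
    (ωstar : ℝ) (hωstar : ωstar = (r₁ - c) / (r₁ + r₂ - 2 * c)) :
    0 < r₁ + r₂ - 2 * c ∧ 0 < ωstar ∧ ωstar ≤ 1 ∧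
      ∀ ω ∈ Set.Icc (0 : ℝ) 1, R ωstar ≤ R ω ∧ (R ωstar = R ω → ω = ωstar) := by
  have hD : 0 < r₁ + r₂ - 2 * c := by linarith
  have hDne : r₁ + r₂ - 2 * c ≠ 0 := ne_of_gt hD
  have hmul : ωstar * (r₁ + r₂ - 2 * c) = r₁ - c := by
    rw [hωstar]; exact div_mul_cancel₀ _ hDne
  have hpos : 0 < ωstar := by
    rw [hωstar]; exact div_pos (by linarith) hD
  have hle : ωstar ≤ 1 := by
    rw [hωstar, div_le_one hD]; linarith
  have key : ∀ ω, R ω - R ωstar = (r₁ + r₂ - 2 * c) * (ω - ωstar) ^ 2 := by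
    intro ω
    rw [hR, hR]
    nlinarith [hmul, sq_nonneg (ω - ωstar)]
  refine ⟨hD, hpos, hle, fun ω _ => ⟨?_, fun heq => ?_⟩⟩
  · nlinarith [key ω, sq_nonneg (ω - ωstar)]
  · have h := key ω
    rw [← heq] at h
    have : (ω - ωstar) ^ 2 = 0 := by
      by_contra hne
      have : 0 < (ω - ωstar) ^ 2 := lt_of_le_of_ne (sq_nonneg _) (Ne.symm hne)
      nlinarith
    have := pow_eq_zero_iff (n := 2) (by norm_num) |>.mp this
    linarith
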